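/- Let K ⊆ R^α be any R-submodule and e ≥ 1. Then there exists a smallest submodule L ⊆ R^α such that K ⊆ L^{[p^e]}; that is, there is a submodule L with K ⊆ L^{[p^e]} and such that L ⊆ L' for every submodule L' ⊆ R^α with K ⊆ L'^{[p^e]}. -/

import Mathlib

/-- The bracket power `L^{[q]}` of a submodule `L ⊆ T^α`: the submodule generated by the
entrywise `q`-th powers `v^{[q]}` of the vectors `v ∈ L`. -/
def bracketPower {T : Type*} [CommRing T] {α : ℕ}
    (q : ℕ) (L : Submodule T (Fin α → T)) : Submodule T (Fin α → T) :=
  Submodule.span T ((fun v : Fin α → T => fun i => (v i) ^ q) '' (L : Set (Fin α → T)))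

set_option linter.unusedSectionVars false

section Glue

variable {T : Type*} [CommRing T] {α q : ℕ} {ι : Type*}

/-- The sum `∑ⱼ mⱼ · (uⱼ)^{[q]}` as a function of a finitely supported family `u`. -/
noncomputable def Psi (m : ι → T) (u : ι →₀ (Fin α → T)) : Fin α → T :=
  u.sum fun j v => fun i => m j * (v i) ^ q

variable (hq0 : q ≠ 0) (m : ι → T)
  (hadd : ∀ a b : T, (a + b) ^ q = a ^ q + b ^ q)

theorem fsum_apply {β : Type*} [Zero β] (u : ι →₀ β) (h : ι → β → Fin α → T) (i : Fin α) :
    (u.sum h) i = u.sum fun j v => h j v i :=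
  Finset.sum_apply _ _ _

section
include hq0 hadd

theorem Psi_zero : Psi (q := q) (α := α) m 0 = 0 := Finsupp.sum_zero_index

theorem Psi_add (u u' : ι →₀ (Fin α → T)) :
    Psi (q := q) m (u + u') = Psi (q := q) m u + Psi (q := q) m u' :=
  Finsupp.sum_add_index'
    (fun j => funext fun i => by simp [zero_pow hq0])
    (fun j v v' => funext fun i => by
      simp only [Pi.add_apply, hadd, mul_add])

/-- `Psi` as an additive monoid hom. -/
noncomputable def PsiHom : (ι →₀ (Fin α → T)) →+ (Fin α → T) where
  toFun := Psi (q := q) m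
  map_zero' := Psi_zero hq0 m hadd
  map_add' := Psi_add hq0 m hadd

theorem Psi_eq_zero_iff (hB : ∀ g : ι →₀ T, (g.sum fun j c => m j * c ^ q) = 0 → g = 0)
    (u : ι →₀ (Fin α → T)) (hu : Psi (q := q) m u = 0) : u = 0 := by
  ext j i
  have hgi : ((u.mapRange (fun v => v i) rfl).sum fun j c => m j * c ^ q) = 0 := by
    rw [Finsupp.sum_mapRange_index (fun j => by simp [zero_pow hq0])]
    have h := congrFun hu i
    rw [Psi, fsum_apply] at h
    exact h
  have := hB _ hgi
  have h2 := DFunLike.congr_fun this j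
  simpa using h2
end

section
include hq0 hadd

theorem Psi_mem_bracketPower (L : Submodule T (Fin α → T)) (u : ι →₀ (Fin α → T))
    (hu : ∀ j, u j ∈ L) : Psi (q := q) m u ∈ bracketPower q L := by
  rw [Psi, Finsupp.sum]
  refine Submodule.sum_mem _ fun j _ => ?_
  show (fun i => m j * (u j i) ^ q) ∈ bracketPower q L
  have : (fun i => m j * (u j i) ^ q) = m j • fun i => (u j i) ^ q := by
    funext i; simp [mul_comm]
  rw [this]
  exact Submodule.smul_mem _ _ (Submodule.subset_span ⟨u j, hu j, rfl⟩)

theorem decompose_single (hA : ∀ f : T, ∃ g : ι →₀ T, f = g.sum fun j c => m j * c ^ q)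
    (r : T) (v : Fin α → T) :
    ∃ u : ι →₀ (Fin α → T), (∀ j, ∃ c : T, u j = c • v) ∧
      Psi (q := q) m u = r • fun i => (v i) ^ q := by
  obtain ⟨g, hg⟩ := hA r
  refine ⟨g.mapRange (fun c => c • v) (zero_smul _ _), fun j => ?_, ?_⟩
  · rw [Finsupp.mapRange_apply]; exact ⟨g j, rfl⟩
  · rw [Psi, Finsupp.sum_mapRange_index (fun j => funext fun i => by simp [zero_pow hq0])]
    funext i
    rw [fsum_apply]
    have : ∀ (j : ι) (c : T), m j * ((c • v) i) ^ q = (m j * c ^ q) * (v i) ^ q := by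
      intro j c
      simp [mul_pow, mul_assoc]
    rw [Finsupp.sum_congr (g2 := fun j c => (m j * c ^ q) * (v i) ^ q)
      (fun j _ => this j (g j)), ← Finsupp.sum_mul, ← hg]
    simp

theorem decompose_span (hA : ∀ f : T, ∃ g : ι →₀ T, f = g.sum fun j c => m j * c ^ q)
    (L : Submodule T (Fin α → T)) (w : Fin α → T) (hw : w ∈ bracketPower q L) :
    ∃ u : ι →₀ (Fin α → T), (∀ j, u j ∈ L) ∧ Psi (q := q) m u = w := by
  rw [bracketPower, Submodule.mem_span_set'] at hw
  obtain ⟨k, f, gen, hsum⟩ := hw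
  -- for each generator, pick a preimage in L
  have hgen : ∀ t : Fin k, ∃ v : Fin α → T, v ∈ L ∧ (fun i => (v i) ^ q) = (gen t : Fin α → T) := by
    intro t
    obtain ⟨v, hv, hveq⟩ := (gen t).2
    exact ⟨v, hv, hveq⟩
  choose v hvL hveq using hgen
  have hdec : ∀ t : Fin k, ∃ u : ι →₀ (Fin α → T), (∀ j, u j ∈ L) ∧
      Psi (q := q) m u = f t • (gen t : Fin α → T) := by
    intro t
    obtain ⟨u, hmem, heq⟩ := decompose_single hq0 m hadd hA (f t) (v t)
    refine ⟨u, fun j => ?_, ?_⟩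
    · obtain ⟨c, hc⟩ := hmem j
      rw [hc]; exact Submodule.smul_mem _ _ (hvL t)
    · rw [heq, hveq]
  choose u hmem hequ using hdec
  refine ⟨∑ t, u t, fun j => ?_, ?_⟩
  · rw [Finset.sum_apply']
    exact Submodule.sum_mem _ fun t _ => hmem t j
  · have : Psi (q := q) m (∑ t, u t) = ∑ t, Psi (q := q) m (u t) :=
      map_sum (PsiHom hq0 m hadd) u Finset.univ
    rw [this, Finset.sum_congr rfl fun t _ => hequ t, hsum]

theorem decompose_top (hA : ∀ f : T, ∃ g : ι →₀ T, f = g.sum fun j c => m j * c ^ q)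
    (w : Fin α → T) : ∃ u : ι →₀ (Fin α → T), Psi (q := q) m u = w := by
  have hdec : ∀ i : Fin α, ∃ u : ι →₀ (Fin α → T),
      Psi (q := q) m u = Pi.single i (w i) := by
    intro i
    obtain ⟨g, hg⟩ := hA (w i)
    refine ⟨g.mapRange (fun c => Pi.single i c) (Pi.single_zero i), ?_⟩
    rw [Psi, Finsupp.sum_mapRange_index (fun j => funext fun k => by simp [zero_pow hq0])]
    funext k
    rw [fsum_apply]
    by_cases hk : k = i
    · subst hk
      simp only [Pi.single_eq_same]
      rw [← hg]
    · rw [Pi.single_eq_of_ne hk]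
      refine Finset.sum_eq_zero fun j _ => ?_
      simp [Pi.single_eq_of_ne hk, zero_pow hq0]
  choose u hu using hdec
  refine ⟨∑ i, u i, ?_⟩
  have : Psi (q := q) m (∑ i, u i) = ∑ i, Psi (q := q) m (u i) :=
    map_sum (PsiHom hq0 m hadd) u Finset.univ
  rw [this, Finset.sum_congr rfl fun i _ => hu i]
  exact Finset.univ_sum_single w

theorem glue (hA : ∀ f : T, ∃ g : ι →₀ T, f = g.sum fun j c => m j * c ^ q)
    (hB : ∀ g : ι →₀ T, (g.sum fun j c => m j * c ^ q) = 0 → g = 0)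
    (K' : Submodule T (Fin α → T)) :
    ∃ L : Submodule T (Fin α → T),
      IsLeast {L' : Submodule T (Fin α → T) | K' ≤ bracketPower q L'} L := by
  set S := {L' : Submodule T (Fin α → T) | K' ≤ bracketPower q L'} with hS
  refine ⟨sInf S, ?_, fun L' hL' => sInf_le hL'⟩
  intro w hw
  obtain ⟨u₀, hu₀⟩ := decompose_top hq0 m hadd hA w
  have hmem : ∀ j, u₀ j ∈ sInf S := by
    intro j
    rw [Submodule.mem_sInf]
    intro L' hL'
    obtain ⟨u, humem, hueq⟩ := decompose_span hq0 m hadd hA L' w (hL' hw)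
    have : u = u₀ := by
      have hsub : Psi (q := q) m (u - u₀) = 0 := by
        have h1 : Psi (q := q) m (u - u₀) = Psi (q := q) m u - Psi (q := q) m u₀ :=
          map_sub (PsiHom hq0 m hadd) u u₀
        rw [h1, hueq, hu₀, sub_self]
      have := Psi_eq_zero_iff hq0 m hadd hB _ hsub
      exact sub_eq_zero.mp this
    rw [← this]
    exact humem j
  rw [← hu₀]
  exact Psi_mem_bracketPower hq0 m hadd (sInf S) u₀ hmem

end

end Glue

namespace BracketPowerAux

open MvPolynomial

variable {K : Type*} [Field K] {p n : ℕ} [CharP K p]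

theorem pow_q_eq_sum (hp : p.Prime) (e : ℕ) (g : MvPolynomial (Fin n) K) :
    g ^ p ^ e = ∑ d ∈ g.support, monomial (p ^ e • d) (coeff d g ^ p ^ e) := by
  haveI : ExpChar (MvPolynomial (Fin n) K) p := .prime hp
  conv_lhs => rw [g.as_sum]
  rw [sum_pow_char_pow]
  exact Finset.sum_congr rfl fun d _ => by rw [monomial_pow]

theorem decomp_unique (hp : p.Prime) (e : ℕ) {a a₀ : Fin n → Fin (p ^ e)} {d d' : Fin n →₀ ℕ}
    (h : (Finsupp.equivFunOnFinite.symm fun i => ((a i : ℕ))) + p ^ e • d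
       = (Finsupp.equivFunOnFinite.symm fun i => ((a₀ i : ℕ))) + p ^ e • d') :
    a = a₀ ∧ d = d' := by
  have hq0 : 0 < p ^ e := pow_pos hp.pos _
  have key : ∀ i, (a i : ℕ) + p ^ e * d i = (a₀ i : ℕ) + p ^ e * d' i := by
    intro i
    have := DFunLike.congr_fun h i
    simpa [Finsupp.add_apply, Finsupp.smul_apply, smul_eq_mul] using this
  have ha : ∀ i, (a i : ℕ) = (a₀ i : ℕ) := by
    intro i
    have := congrArg (· % p ^ e) (key i)
    simpa [Nat.add_mul_mod_self_left, Nat.mod_eq_of_lt (a i).isLt,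
      Nat.mod_eq_of_lt (a₀ i).isLt] using this
  constructor
  · funext i; exact Fin.ext (ha i)
  · ext i
    have := key i
    rw [ha i] at this
    exact Nat.eq_of_mul_eq_mul_left hq0 (Nat.add_left_cancel this)

theorem coeff_m_mul (hp : p.Prime) (e : ℕ) (b : K) (a a₀ : Fin n → Fin (p ^ e))
    (d' : Fin n →₀ ℕ) (h : MvPolynomial (Fin n) K) :
    coeff ((Finsupp.equivFunOnFinite.symm fun i => ((a₀ i : ℕ))) + p ^ e • d')
      ((monomial (Finsupp.equivFunOnFinite.symm fun i => ((a i : ℕ)))) b * h ^ p ^ e)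
    = if a = a₀ then b * (coeff d' h) ^ p ^ e else 0 := by
  have hq0 : p ^ e ≠ 0 := pow_ne_zero _ hp.ne_zero
  rw [pow_q_eq_sum hp e, Finset.mul_sum, coeff_sum]
  simp_rw [monomial_mul, coeff_monomial]
  by_cases ha : a = a₀
  · subst ha
    rw [if_pos rfl, Finset.sum_congr rfl (fun d _ => ?_), Finset.sum_ite_eq' h.support d'
      (fun d => b * (coeff d h) ^ p ^ e)]
    · by_cases hd : d' ∈ h.support
      · rw [if_pos hd]
      · rw [if_neg hd, notMem_support_iff.mp hd, zero_pow hq0, mul_zero]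
    · congr 1
      · simp only [eq_iff_iff]
        constructor
        · intro hh; exact ((decomp_unique hp e hh).2)
        · rintro rfl; rfl
  · rw [if_neg ha]
    refine Finset.sum_eq_zero fun d _ => ?_
    rw [if_neg]
    intro hh
    exact ha (decomp_unique hp e hh).1


noncomputable def Fq (hp : p.Prime) (e : ℕ) : Subfield K :=
  haveI : ExpChar K p := .prime hp
  (iterateFrobenius K p e).fieldRange

theorem mem_Fq {hp : p.Prime} {e : ℕ} {x : K} : x ∈ Fq hp e ↔ ∃ y : K, y ^ p ^ e = x := by
  haveI : ExpChar K p := .prime hp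
  exact RingHom.mem_fieldRange

noncomputable def rt (hp : p.Prime) (e : ℕ) (s : Fq (K := K) hp e) : K :=
  Classical.choose (mem_Fq.mp s.2)

theorem rt_spec (hp : p.Prime) (e : ℕ) (s : Fq (K := K) hp e) :
    rt hp e s ^ p ^ e = (s : K) :=
  Classical.choose_spec (mem_Fq.mp s.2)

theorem rt_zero (hp : p.Prime) (e : ℕ) : rt hp e (0 : Fq (K := K) hp e) = 0 := by
  have h := rt_spec hp e (0 : Fq (K := K) hp e)
  rw [ZeroMemClass.coe_zero, pow_eq_zero_iff (pow_ne_zero _ hp.ne_zero)] at h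
  exact h

/-- The index type for the "twisted basis" of `K[x]` over `K[x]^{q}`. -/
def Idx (hp : p.Prime) (e n : ℕ) : Type _ :=
  ↥(Module.Basis.ofVectorSpaceIndex (Fq (K := K) hp e) K) × (Fin n → Fin (p ^ e))

/-- The twisted basis elements: `b · x^a` with `b` from a basis of `K` over `K^q`
and `a` ranging over exponents `< q`. -/
noncomputable def mB (hp : p.Prime) (e : ℕ) (j : Idx (K := K) hp e n) :
    MvPolynomial (Fin n) K :=
  monomial (Finsupp.equivFunOnFinite.symm fun i => ((j.2 i : ℕ))) (j.1 : K)

theorem lemA (hp : p.Prime) (e : ℕ) (f : MvPolynomial (Fin n) K) :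
    ∃ g : Idx (K := K) hp e n →₀ MvPolynomial (Fin n) K,
      f = g.sum fun j c => mB hp e j * c ^ p ^ e := by
  haveI : ExpChar (MvPolynomial (Fin n) K) p := .prime hp
  have hq0 : p ^ e ≠ 0 := pow_ne_zero _ hp.ne_zero
  have hqpos : 0 < p ^ e := pow_pos hp.pos _
  induction f using MvPolynomial.induction_on' with
  | add f₁ f₂ ih₁ ih₂ =>
    obtain ⟨g₁, hg₁⟩ := ih₁
    obtain ⟨g₂, hg₂⟩ := ih₂
    refine ⟨g₁ + g₂, ?_⟩
    rw [Finsupp.sum_add_index' (fun j => by rw [zero_pow hq0, mul_zero])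
      (fun j c₁ c₂ => by rw [add_pow_expChar_pow, mul_add]), hg₁, hg₂]
  | monomial d c =>
    classical
    set q := p ^ e with hq
    set a : Fin n → Fin (p ^ e) := fun i => ⟨d i % q, Nat.mod_lt _ hqpos⟩ with ha
    set d' : Fin n →₀ ℕ := d.mapRange (· / q) (Nat.zero_div q) with hd'
    have hd : (Finsupp.equivFunOnFinite.symm fun i => ((a i : ℕ))) + q • d' = d := by
      ext i
      simp only [Finsupp.add_apply, Finsupp.smul_apply, smul_eq_mul, ha, hd',
        Finsupp.mapRange_apply, Finsupp.coe_equivFunOnFinite_symm]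
      exact Nat.mod_add_div (d i) q
    set B := Module.Basis.ofVectorSpace (Fq (K := K) hp e) K with hB
    set t := B.repr c with ht
    refine ⟨Finsupp.embDomain ⟨fun b => (b, a), fun b b' hbb => by
        simpa using congrArg Prod.fst hbb⟩
      (t.mapRange (fun s => C (rt hp e s) * monomial d' 1)
        (by simp only [rt_zero, map_zero, zero_mul])), ?_⟩
    rw [Finsupp.sum_embDomain, Finsupp.sum_mapRange_index
      (fun b => by rw [zero_pow hq0, mul_zero])]
    simp only [Function.Embedding.coeFn_mk, Idx]
    have hterm : ∀ (b : Module.Basis.ofVectorSpaceIndex (Fq (K := K) hp e) K) (s : Fq (K := K) hp e),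
        mB hp e ((b, a) : Idx (K := K) hp e n) * (C (rt hp e s) * monomial d' 1) ^ q
        = monomial d ((s : K) * (b : K)) := by
      intro b s
      rw [mul_pow, ← map_pow, rt_spec, monomial_pow, one_pow]; unfold mB
      rw [C_apply, monomial_mul, monomial_mul]
      rw [← hd]
      congr 1
      · abel_nf
      · ring
    rw [Finsupp.sum_congr (g2 := fun (b : Module.Basis.ofVectorSpaceIndex (Fq (K := K) hp e) K) (s : Fq (K := K) hp e) => monomial d ((s : K) * (b : K)))
      (fun b _ => hterm b (t b)), ← map_finsuppSum (monomial d)]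
    congr 1
    conv_lhs => rw [← B.linearCombination_repr c]
    rw [Finsupp.linearCombination_apply, ← ht]
    exact Finsupp.sum_congr (g2 := fun (b : Module.Basis.ofVectorSpaceIndex (Fq (K := K) hp e) K) (s : Fq (K := K) hp e) => (s : K) * (b : K)) fun b _ => by
      rw [Subfield.smul_def, smul_eq_mul, hB, Module.Basis.ofVectorSpace_apply_self]


theorem lemB (hp : p.Prime) (e : ℕ)
    (g : (↥(Module.Basis.ofVectorSpaceIndex (Fq (K := K) hp e) K) × (Fin n → Fin (p ^ e)))
      →₀ MvPolynomial (Fin n) K)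
    (hg : (g.sum fun j c => mB hp e j * c ^ p ^ e) = 0) : g = 0 := by
  classical
  have hq0 : p ^ e ≠ 0 := pow_ne_zero _ hp.ne_zero
  set B := Module.Basis.ofVectorSpace (Fq (K := K) hp e) K with hB
  have li := linearIndependent_iff''.mp B.linearIndependent
  ext j d'
  obtain ⟨b₀, a₀⟩ := j
  -- the coefficient extraction
  have key : ∀ b : ↥(Module.Basis.ofVectorSpaceIndex (Fq (K := K) hp e) K),
      (coeff d' (g (b, a₀))) ^ p ^ e ∈ Fq (K := K) hp e := fun b =>
    mem_Fq.mpr ⟨coeff d' (g (b, a₀)), rfl⟩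
  set cf : ↥(Module.Basis.ofVectorSpaceIndex (Fq (K := K) hp e) K) → Fq (K := K) hp e :=
    fun b => ⟨(coeff d' (g (b, a₀))) ^ p ^ e, key b⟩ with hcf
  set s : Finset ↥(Module.Basis.ofVectorSpaceIndex (Fq (K := K) hp e) K) :=
    (g.support.filter fun j => j.2 = a₀).image Prod.fst with hs
  have h0 : ∀ b, b ∉ s → cf b = 0 := by
    intro b hb
    have hns : (b, a₀) ∉ g.support := by
      intro hmem
      exact hb (Finset.mem_image.mpr ⟨(b, a₀), Finset.mem_filter.mpr ⟨hmem, rfl⟩, rfl⟩)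
    have : g (b, a₀) = 0 := Finsupp.notMem_support_iff.mp hns
    apply Subtype.ext
    simp [hcf, this, zero_pow hq0]
  have hsum : ∑ b ∈ s, cf b • B b = 0 := by
    have hco := congrArg
      (coeff ((Finsupp.equivFunOnFinite.symm fun i => ((a₀ i : ℕ))) + p ^ e • d')) hg
    rw [coeff_zero, Finsupp.sum, coeff_sum] at hco
    have hterm : ∀ j ∈ g.support,
        coeff ((Finsupp.equivFunOnFinite.symm fun i => ((a₀ i : ℕ))) + p ^ e • d')
          (mB hp e j * (g j) ^ p ^ e)
        = if j.2 = a₀ then (j.1 : K) * (coeff d' (g j)) ^ p ^ e else 0 := by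
      intro j _
      exact coeff_m_mul hp e (j.1 : K) j.2 a₀ d' (g j)
    rw [Finset.sum_congr rfl hterm, ← Finset.sum_filter] at hco
    have hinj : ∀ x ∈ g.support.filter (fun j => j.2 = a₀),
        ∀ y ∈ g.support.filter (fun j => j.2 = a₀), x.1 = y.1 → x = y := by
      intro x hx y hy hxy
      exact Prod.ext hxy (((Finset.mem_filter.mp hx).2).trans
        ((Finset.mem_filter.mp hy).2).symm)
    have himg := Finset.sum_image (f := fun b => cf b • B b) hinj
    rw [hs, himg, ← hco]
    refine Finset.sum_congr rfl fun j hj => ?_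
    obtain ⟨j1, j2⟩ := j
    have hj2 : j2 = a₀ := (Finset.mem_filter.mp hj).2
    subst hj2
    show cf j1 • B j1 = _
    rw [Subfield.smul_def, smul_eq_mul, hB, Module.Basis.ofVectorSpace_apply_self]
    exact mul_comm _ _
  have := li s cf h0 hsum b₀
  rw [hcf] at this
  have h2 : (coeff d' (g (b₀, a₀))) ^ p ^ e = 0 := congrArg Subtype.val this
  exact pow_eq_zero_iff hq0 |>.mp h2


end BracketPowerAux

/-- Let `R = K[x₁,…,xₙ]` be a polynomial ring over a field `K` of prime
characteristic `p`, and let `K' ⊆ R^α` be a submodule and `e ≥ 1`.  Then there is a smallest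
submodule `L ⊆ R^α` with `K' ⊆ L^{[p^e]}`: that is, some `L` satisfies `K' ⊆ L^{[p^e]}` and
`L ⊆ L'` for every submodule `L'` with `K' ⊆ L'^{[p^e]}`. -/
theorem exists_smallest_bracketPower_root
    {K : Type*} [Field K] {p n α : ℕ} (hp : p.Prime) [CharP K p]
    (e : ℕ) (he : 1 ≤ e)
    (K' : Submodule (MvPolynomial (Fin n) K) (Fin α → MvPolynomial (Fin n) K)) :
    ∃ L : Submodule (MvPolynomial (Fin n) K) (Fin α → MvPolynomial (Fin n) K),
      IsLeast {L' : Submodule (MvPolynomial (Fin n) K) (Fin α → MvPolynomial (Fin n) K) |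
        K' ≤ bracketPower (p ^ e) L'} L := by
  classical
  haveI : ExpChar (MvPolynomial (Fin n) K) p := .prime hp
  exact glue (pow_ne_zero e hp.ne_zero) (BracketPowerAux.mB hp e)
    (fun a b => add_pow_expChar_pow a b p e)
    (BracketPowerAux.lemA hp e) (BracketPowerAux.lemB hp e) K'
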